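/- Top-term expansion of σ: σ_{(n-1)(j-i)}^{(r-j+i+n-1)}(x_i,...,x_j) = x_j^{(r)} P_{n-2}^{(r-j+i+n-1)}(x_i,...,x_j) + σ_{(n-1)(j-i-1)}^{(r-j+i)}(x_i,...,x_{j-1}) Π_{t=1}^{n-1} x_i^{(r-j+i+t)}, with upper indices mod n. -/

import Mathlib

open Finset

noncomputable section BirationalR

/-- A vector of reals with cyclically indexed coordinates (upper index mod `n`). -/
abbrev Vec (n : ℕ) := ZMod n → ℝ

/-- `κ_r(a,b) = Σ_{j=r}^{r+n-1} (Π_{k=r+1}^{j} b_k)(Π_{k=j+1}^{r+n-1} a_k)`, indices mod `n`. -/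
def kappaF (n : ℕ) (r : ZMod n) (a b : Vec n) : ℝ :=
  ∑ d ∈ Finset.range n,
    (∏ t ∈ Finset.range d, b (r + 1 + (t : ℕ))) *
      ∏ t ∈ Finset.range (n - 1 - d), a (r + 1 + (d : ℕ) + (t : ℕ))

/-- First component `b'` of the birational R-matrix `η(a,b) = (b',a')`:
`b'_i = b_{i+1} κ_{i+1}(a,b)/κ_i(a,b)`. -/
def etaB (n : ℕ) (a b : Vec n) : Vec n :=
  fun i => b (i + 1) * kappaF n (i + 1) a b / kappaF n i a b

/-- Second component `a'` of `η(a,b) = (b',a')`: `a'_i = a_{i-1} κ_{i-1}(a,b)/κ_i(a,b)`. -/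
def etaA (n : ℕ) (a b : Vec n) : Vec n :=
  fun i => a (i - 1) * kappaF n (i - 1) a b / kappaF n i a b

/-- `η` applied to positions `(p, p+1)` of a tuple of vectors. -/
def etaAt (n : ℕ) (p : ℕ) (X : ℕ → Vec n) : ℕ → Vec n :=
  fun q => if q = p then etaB n (X p) (X (p + 1))
    else if q = p + 1 then etaA n (X p) (X (p + 1)) else X q

/-- Action of the word `s_{w₁} s_{w₂} ⋯ s_{wₗ}` (rightmost acts first). -/
def applyWord (n : ℕ) (w : List ℕ) (X : ℕ → Vec n) : ℕ → Vec n :=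
  w.foldr (etaAt n) X

/-- The tuple `(x_i, x_{i+1}, …, x_j)` as a list. -/
def seg {n : ℕ} (x : ℕ → Vec n) (i j : ℕ) : List (Vec n) :=
  (List.range (j + 1 - i)).map fun t => x (i + t)

/-- `τ_k^{(r)}(x_1,…,x_m)`: sum over weakly increasing `i_1 ≤ … ≤ i_k`, no index used
more than `n-1` times, of `x_{i_1}^{(r)} x_{i_2}^{(r-1)} ⋯ x_{i_k}^{(r-k+1)}`.
Encoded via multiplicity functions; `τ = 0` for negative `k`. -/
def tauF (n : ℕ) (r : ZMod n) (k : ℤ) (x : List (Vec n)) : ℝ :=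
  if 0 ≤ k then
    ∑ c ∈ (Fintype.piFinset fun _ : Fin x.length => Finset.range n).filter
        (fun c => ∑ i, c i = k.toNat),
      ∏ i : Fin x.length, ∏ β ∈ Finset.range (c i),
        x.get i (r - (∑ i' ∈ Finset.univ.filter (fun i' => i' < i), c i' : ℕ) - (β : ℕ))
  else 0

/-- `σ_k^{(r)}(x_1,…,x_m) = Σ_{t=0}^{k} x_1^{(r)} ⋯ x_1^{(r-t+1)} τ_{k-t}^{(r-t)}(x_2,…,x_m)`. -/
def sigmaF (n : ℕ) (r : ZMod n) (k : ℕ) : List (Vec n) → ℝ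
  | [] => if k = 0 then 1 else 0
  | y :: rest =>
      ∑ t ∈ Finset.range (k + 1),
        (∏ β ∈ Finset.range t, y (r - (β : ℕ))) * tauF n (r - (t : ℕ)) ((k : ℤ) - (t : ℤ)) rest

/-- `σ̄_k^{(r)}(x_1,…,x_m) = Σ_{t=0}^{k} τ_{k-t}^{(r)}(x_1,…,x_{m-1}) x_m^{(r-k+t)} ⋯ x_m^{(r-k+1)}`. -/
def sigmaBarF (n : ℕ) (r : ZMod n) (k : ℕ) : List (Vec n) → ℝ
  | [] => if k = 0 then 1 else 0
  | y :: rest =>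
      ∑ t ∈ Finset.range (k + 1),
        tauF n r ((k : ℤ) - (t : ℤ)) ((y :: rest).dropLast) *
          ∏ β ∈ Finset.range t,
            (y :: rest).getLast (List.cons_ne_nil y rest) (r - (k : ℕ) + 1 + (β : ℕ))

/-- `Ω_k^{(r)}(x_i,…,x_j) = Σ_{ℓ=0}^{n-1} σ^{(r)}_{(n-1)(k-i)+ℓ}(x_i,…,x_k)
σ̄^{(r+k-i-ℓ)}_{(n-1)(j-k)-ℓ}(x_{k+1},…,x_j)`. -/
def OmegaF (n : ℕ) (r : ZMod n) (k i j : ℕ) (x : ℕ → Vec n) : ℝ :=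
  ∑ ℓ ∈ Finset.range n,
    sigmaF n r ((n - 1) * (k - i) + ℓ) (seg x i k) *
      sigmaBarF n (r + (k : ℕ) - (i : ℕ) - (ℓ : ℕ)) ((n - 1) * (j - k) - ℓ) (seg x (k + 1) j)

/-- `P_k^{(r)}(x_i,…,x_j) = Σ_{t=0}^{k} (Π_{s=0}^{t-1} x_i^{(r-s)})
σ_{(n-1)(j-i-1)}^{(r-t)}(x_i,…,x_{j-1}) (Π_{s=0}^{k-t-1} x_j^{(r-t+j-i-1-s)})`. -/
def PF (n : ℕ) (r : ZMod n) (k i j : ℕ) (x : ℕ → Vec n) : ℝ :=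
  ∑ t ∈ Finset.range (k + 1),
    (∏ s ∈ Finset.range t, x i (r - (s : ℕ))) *
      sigmaF n (r - (t : ℕ)) ((n - 1) * (j - i - 1)) (seg x i (j - 1)) *
      ∏ s ∈ Finset.range (k - t), x j (r - (t : ℕ) + (j : ℕ) - (i : ℕ) - 1 - (s : ℕ))

end BirationalR


lemma tau_neg (n : ℕ) (r : ZMod n) (k : ℤ) (hk : k < 0) (x : List (Vec n)) :
    tauF n r k x = 0 := by
  rw [tauF, if_neg (by omega)]

lemma tau_big (n : ℕ) (r : ZMod n) (k : ℤ) (x : List (Vec n))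
    (hk : ((n - 1) * x.length : ℕ) < k) : tauF n r k x = 0 := by
  rw [tauF]
  split
  · apply Finset.sum_eq_zero
    intro c hc
    exfalso
    simp only [Finset.mem_filter, Fintype.mem_piFinset, Finset.mem_range] at hc
    have h1 : ∑ i, c i ≤ (n - 1) * x.length := by
      calc ∑ i, c i ≤ ∑ _i : Fin x.length, (n-1) :=
            Finset.sum_le_sum (fun i _ => by have := hc.1 i; omega)
        _ = (n-1) * x.length := by simp [mul_comm]
    omega
  · rfl

lemma seg_cons {n : ℕ} (x : ℕ → Vec n) (i j : ℕ) (h : i ≤ j) :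
    seg x i j = x i :: seg x (i+1) j := by
  unfold seg
  have h1 : j + 1 - i = (j - i) + 1 := by omega
  have h2 : j + 1 - (i+1) = j - i := by omega
  rw [h1, h2, List.range_succ_eq_map, List.map_cons, List.map_map]
  have he : ((fun t => x (i + t)) ∘ Nat.succ) = (fun t => x (i + 1 + t)) := by
    funext a
    show x (i + (a+1)) = x (i+1+a)
    rw [show i + (a+1) = i+1+a from by omega]
  rw [he]
  norm_num

lemma seg_snoc {n : ℕ} (x : ℕ → Vec n) (i j : ℕ) (h : i ≤ j) (h1 : 1 ≤ j) :
    seg x i j = seg x i (j-1) ++ [x j] := by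
  unfold seg
  have h2 : j + 1 - i = (j - i) + 1 := by omega
  have h3 : j - 1 + 1 - i = j - i := by omega
  rw [h2, h3, List.range_succ, List.map_append]
  have : i + (j - i) = j := by omega
  simp [this]

lemma seg_length {n : ℕ} (x : ℕ → Vec n) (i j : ℕ) : (seg x i j).length = j + 1 - i := by
  simp [seg]

def tauV (n : ℕ) (ρ : ZMod n) (K : ℕ) (m : ℕ) (v : Fin m → Vec n) : ℝ :=
  ∑ c ∈ (Fintype.piFinset fun _ : Fin m => Finset.range n).filter
      (fun c => ∑ i, c i = K),
    ∏ i : Fin m, ∏ β ∈ Finset.range (c i),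
      v i (ρ - (∑ i' ∈ Finset.univ.filter (fun i' => i' < i), c i' : ℕ) - (β : ℕ))

lemma tauF_eq_tauV (n : ℕ) (ρ : ZMod n) (K : ℕ) (x : List (Vec n)) :
    tauF n ρ (K : ℤ) x = tauV n ρ K x.length x.get := by
  rw [tauF, if_pos (by exact_mod_cast Int.natCast_nonneg K)]
  simp [tauV]

lemma tauV_succ (n : ℕ) (ρ : ZMod n) (K : ℕ) (m : ℕ) (v : Fin (m+1) → Vec n) :
    tauV n ρ K (m+1) v =
      ∑ c0 ∈ (Finset.range n).filter (· ≤ K),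
        (∏ β ∈ Finset.range c0, v 0 (ρ - (β:ℕ))) *
          tauV n (ρ - (c0:ℕ)) (K - c0) m (fun i => v i.succ) := by
  have step1 : ∀ c0 ∈ (Finset.range n).filter (· ≤ K),
      (∏ β ∈ Finset.range c0, v 0 (ρ - (β:ℕ))) *
        tauV n (ρ - (c0:ℕ)) (K - c0) m (fun i => v i.succ)
      = ∑ c' ∈ (Fintype.piFinset fun _ : Fin m => Finset.range n).filter
            (fun c => ∑ i, c i = K - c0),
          (∏ β ∈ Finset.range c0, v 0 (ρ - (β:ℕ))) *
          ∏ i : Fin m, ∏ β ∈ Finset.range (c' i),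
            v i.succ (ρ - (c0:ℕ) -
              (∑ i' ∈ Finset.univ.filter (fun i' => i' < i), c' i' : ℕ) - (β : ℕ)) := by
    intro c0 _
    rw [tauV, Finset.mul_sum]
  rw [Finset.sum_congr rfl step1, Finset.sum_sigma']
  rw [tauV]
  refine Finset.sum_bij' (fun c _ => (⟨c 0, fun i => c i.succ⟩ : Σ _ : ℕ, Fin m → ℕ))
    (fun p _ => Fin.cons p.1 p.2) ?_ ?_ ?_ ?_ ?_
  · -- hi
    intro c hc
    simp only [Finset.mem_filter, Fintype.mem_piFinset, Finset.mem_range] at hc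
    obtain ⟨h1, h2⟩ := hc
    rw [Fin.sum_univ_succ] at h2
    simp only [Finset.mem_sigma, Finset.mem_filter, Fintype.mem_piFinset, Finset.mem_range]
    refine ⟨⟨h1 0, by omega⟩, fun i => h1 i.succ, by omega⟩
  · -- hj
    intro p hp
    simp only [Finset.mem_sigma, Finset.mem_filter, Fintype.mem_piFinset,
      Finset.mem_range] at hp
    obtain ⟨⟨h1, h2⟩, h3, h4⟩ := hp
    simp only [Finset.mem_filter, Fintype.mem_piFinset, Finset.mem_range]
    constructor
    · intro i
      refine Fin.cases ?_ ?_ i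
      · simpa using h1
      · intro i'; simpa using h3 i'
    · rw [Fin.sum_univ_succ]
      simp only [Fin.cons_zero, Fin.cons_succ]
      omega
  · -- left_inv
    intro c _
    exact Fin.cons_self_tail c
  · -- right_inv
    intro p _
    simp [Fin.cons_zero, Fin.cons_succ]
  · -- value
    intro c hc
    simp only [Finset.mem_filter, Fintype.mem_piFinset, Finset.mem_range] at hc
    rw [Fin.prod_univ_succ]
    congr 1
    · -- head factor
      have h0 : (Finset.univ.filter (fun i' => i' < (0 : Fin (m+1)))) = ∅ := by
        apply Finset.filter_false_of_mem
        intro i _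
        exact Fin.not_lt_zero i
      rw [h0]
      simp
    · -- tail factors
      apply Finset.prod_congr rfl
      intro i _
      apply Finset.prod_congr rfl
      intro β _
      congr 1
      have hS : (∑ i' ∈ Finset.univ.filter (fun i' => i' < i.succ), c i')
          = c 0 + ∑ i' ∈ Finset.univ.filter (fun i' => i' < i), c i'.succ := by
        rw [Finset.sum_filter, Finset.sum_filter, Fin.sum_univ_succ]
        congr 1
        · apply Finset.sum_congr rfl
          intro i' _
          simp only [Fin.succ_lt_succ_iff]
      rw [hS]
      push_cast
      ring

lemma tau_cons (n : ℕ) (ρ : ZMod n) (K : ℤ) (y : Vec n) (ys : List (Vec n)) :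
    tauF n ρ K (y :: ys) =
      ∑ c0 ∈ Finset.range n, (∏ β ∈ Finset.range c0, y (ρ - (β:ℕ))) *
        tauF n (ρ - (c0:ℕ)) (K - (c0:ℕ)) ys := by
  rcases lt_or_ge K 0 with hK|hK
  · rw [tau_neg _ _ _ hK]
    symm
    apply Finset.sum_eq_zero
    intro c0 _
    rw [tau_neg _ _ _ (by omega), mul_zero]
  · lift K to ℕ using hK
    rw [tauF_eq_tauV]
    have h1 : tauV n ρ K ((y::ys).length) ((y::ys).get) =
        tauV n ρ K (ys.length+1) (fun i : Fin (ys.length+1) => (y::ys).get i) := rfl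
    rw [h1, tauV_succ]
    have h2 : ∀ c0 ∈ (Finset.range n).filter (· ≤ K),
        (∏ β ∈ Finset.range c0, (fun i : Fin (ys.length+1) => (y::ys).get i) 0 (ρ - (β:ℕ))) *
          tauV n (ρ - (c0:ℕ)) (K - c0) ys.length
            (fun i => (fun i : Fin (ys.length+1) => (y::ys).get i) i.succ)
        = (∏ β ∈ Finset.range c0, y (ρ - (β:ℕ))) *
          tauF n (ρ - (c0:ℕ)) ((K:ℤ) - (c0:ℕ)) ys := by
      intro c0 hc0
      simp only [Finset.mem_filter, Finset.mem_range] at hc0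
      have hc : ((K:ℤ) - (c0:ℕ)) = ((K - c0 : ℕ) : ℤ) := by omega
      rw [hc, tauF_eq_tauV]
      rfl
    rw [Finset.sum_congr rfl h2]
    apply Finset.sum_filter_of_ne
    intro c0 _ hne
    by_contra h
    apply hne
    rw [tau_neg _ _ _ (by omega), mul_zero]

lemma tau_nil (n : ℕ) (ρ : ZMod n) (K : ℤ) :
    tauF n ρ K [] = if K = 0 then 1 else 0 := by
  rcases lt_or_ge K 0 with hK|hK
  · rw [tau_neg _ _ _ hK, if_neg (by omega)]
  · rw [tauF, if_pos hK]
    by_cases h0 : K = 0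
    · subst h0
      simp
    · rw [if_neg h0]
      apply Finset.sum_eq_zero
      intro c hc
      exfalso
      simp only [Finset.mem_filter, Fintype.mem_piFinset] at hc
      have h2 : ∑ i, c i = 0 :=
        Finset.sum_eq_zero (fun i _ => (Nat.not_lt_zero _ i.isLt).elim)
      have h3 := hc.2
      have h4 := Int.toNat_of_nonneg hK
      omega

lemma prod_shift_reflect (n : ℕ) (z : Vec n) (ρ : ZMod n) (c0 : ℕ) :
    (∏ β ∈ Finset.range c0, z (ρ - (β:ℕ))) =
      ∏ s ∈ Finset.range c0, z (ρ - (c0:ℕ) + 1 + (s:ℕ)) := by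
  rw [← Finset.prod_range_reflect (fun s => z (ρ - (c0:ℕ) + 1 + (s:ℕ))) c0]
  apply Finset.prod_congr rfl
  intro β hβ
  simp only [Finset.mem_range] at hβ
  congr 1
  have h : ((c0 - 1 - β : ℕ) : ZMod n) = (c0 : ZMod n) - 1 - (β : ZMod n) := by
    have : (c0 - 1 - β : ℕ) + 1 + β = c0 := by omega
    have h2 : (((c0 - 1 - β : ℕ) + 1 + β : ℕ) : ZMod n) = (c0 : ZMod n) := by rw [this]
    push_cast at h2
    linear_combination h2
  rw [h]
  ring

lemma tau_snoc (n : ℕ) (ρ : ZMod n) (K : ℤ) (ys : List (Vec n)) (z : Vec n) :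
    tauF n ρ K (ys ++ [z]) =
      ∑ c ∈ Finset.range n, tauF n ρ (K - (c:ℕ)) ys *
        ∏ s ∈ Finset.range c, z (ρ - (K : ZMod n) + 1 + (s:ℕ)) := by
  induction ys generalizing ρ K with
  | nil =>
    rw [List.nil_append, tau_cons]
    apply Finset.sum_congr rfl
    intro c0 _
    rw [tau_nil, tau_nil]
    by_cases h : K - (c0:ℕ) = 0
    · rw [if_pos h, mul_one, one_mul, prod_shift_reflect]
      have h' : K = (c0:ℕ) := by omega
      subst h'
      apply Finset.prod_congr rfl
      intro s _
      congr 1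
      push_cast
      ring
    · rw [if_neg h, mul_zero, zero_mul]
  | cons y ys ih =>
    rw [List.cons_append, tau_cons]
    have step : ∀ c0 ∈ Finset.range n,
        (∏ β ∈ Finset.range c0, y (ρ - (β:ℕ))) *
          tauF n (ρ - (c0:ℕ)) (K - (c0:ℕ)) (ys ++ [z])
        = ∑ c ∈ Finset.range n,
            ((∏ β ∈ Finset.range c0, y (ρ - (β:ℕ))) *
              tauF n (ρ - (c0:ℕ)) (K - (c0:ℕ) - (c:ℕ)) ys) *
            ∏ s ∈ Finset.range c, z (ρ - (K : ZMod n) + 1 + (s:ℕ)) := by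
      intro c0 _
      rw [ih, Finset.mul_sum]
      apply Finset.sum_congr rfl
      intro c _
      have hz : ∀ s : ℕ, (ρ - (c0:ℕ)) - ((K - (c0:ℕ) : ℤ) : ZMod n) + 1 + (s:ℕ)
          = ρ - (K : ZMod n) + 1 + (s:ℕ) := by
        intro s
        push_cast
        ring
      rw [show (∏ s ∈ Finset.range c, z ((ρ - (c0:ℕ)) - ((K - (c0:ℕ) : ℤ) : ZMod n) + 1 + (s:ℕ)))
          = ∏ s ∈ Finset.range c, z (ρ - (K : ZMod n) + 1 + (s:ℕ)) from
        Finset.prod_congr rfl (fun s _ => by rw [hz s])]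
      ring
    rw [Finset.sum_congr rfl step, Finset.sum_comm]
    apply Finset.sum_congr rfl
    intro c _
    rw [← Finset.sum_mul]
    congr 1
    rw [tau_cons]
    apply Finset.sum_congr rfl
    intro c0 _
    congr 2
    omega

lemma sum_shift (g : ℕ → ℝ) (a b N : ℕ) (hab : a + b ≤ N)
    (h1 : ∀ t, t < a → g t = 0) (h2 : ∀ t, a + b < t → g t = 0) :
    ∑ t ∈ Finset.range (N+1), g t = ∑ t' ∈ Finset.range (b+1), g (a + t') := by
  have e1 : ∑ t' ∈ Finset.range (b+1), g (a+t') = ∑ t ∈ Finset.Ico a (a+b+1), g t := by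
    rw [Finset.sum_Ico_eq_sum_range]
    apply Finset.sum_congr
    · congr 1
      omega
    · intros
      rfl
  rw [e1]
  symm
  apply Finset.sum_subset
  · intro t ht
    simp only [Finset.mem_Ico] at ht
    simp only [Finset.mem_range]
    omega
  · intro t ht hnt
    simp only [Finset.mem_range] at ht
    simp only [Finset.mem_Ico] at hnt
    rcases lt_or_ge t a with h|h
    · exact h1 t h
    · exact h2 t (by omega)

/-- The common normal form summand. -/
def gAux (n : ℕ) (x : ℕ → Vec n) (i j : ℕ) (r R : ZMod n) (k : ℕ)
    (mid : List (Vec n)) (c t : ℕ) : ℝ :=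
  (∏ β ∈ Finset.range t, x i (R - (β:ℕ))) *
    tauF n (R - (t:ℕ)) ((k:ℤ) - (t:ℤ) - (c:ℤ)) mid *
    ∏ s ∈ Finset.range c, x j (r + (s:ℕ))

/-- top-term expansion of `σ`:
`σ_{(n-1)(j-i)}^{(r-j+i+n-1)} = x_j^{(r)} P_{n-2}^{(r-j+i+n-1)} +
σ_{(n-1)(j-i-1)}^{(r-j+i)}(x_i,…,x_{j-1}) Π_{t=1}^{n-1} x_i^{(r-j+i+t)}`. -/
theorem sigma_top_expansion (n : ℕ) (hn : 2 ≤ n) (x : ℕ → Vec n)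
    (hx : ∀ p r, 0 < x p r) (i j : ℕ) (hi : 1 ≤ i) (hij : i < j) (r : ZMod n) :
    sigmaF n (r - (j : ℕ) + (i : ℕ) + ((n : ℕ) - 1 : ℕ)) ((n - 1) * (j - i)) (seg x i j) =
      x j r * PF n (r - (j : ℕ) + (i : ℕ) + ((n : ℕ) - 1 : ℕ)) (n - 2) i j x +
        sigmaF n (r - (j : ℕ) + (i : ℕ)) ((n - 1) * (j - i - 1)) (seg x i (j - 1)) *
          ∏ t ∈ Finset.range (n - 1), x i (r - (j : ℕ) + (i : ℕ) + ((t : ℕ) + 1)) := by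
  have hk : (n-1)*(j-i) = (n-1)*(j-i-1) + (n-1) := by
    obtain ⟨d, hd⟩ : ∃ d, j - i = d + 1 := ⟨j-i-1, by omega⟩
    rw [hd, Nat.mul_add, Nat.mul_one, Nat.add_sub_cancel]
  have hn1 : ((n-1 : ℕ) : ZMod n) = -1 := by
    rw [Nat.cast_sub (by omega : 1 ≤ n), ZMod.natCast_self]
    ring
  have hkc : (((n-1)*(j-i) : ℕ) : ZMod n) = (i : ZMod n) - (j : ZMod n) := by
    rw [Nat.cast_mul, hn1, Nat.cast_sub (le_of_lt hij)]
    ring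
  have hmid : (seg x (i+1) (j-1)).length = j - i - 1 := by
    rw [seg_length]
    omega
  have hsegm : seg x i (j-1) = x i :: seg x (i+1) (j-1) := seg_cons x i (j-1) (by omega)
  have haveL : sigmaF n (r - (j : ℕ) + (i : ℕ) + ((n : ℕ) - 1 : ℕ)) ((n - 1) * (j - i))
        (seg x i j) =
      ∑ c ∈ Finset.range n, ∑ t' ∈ Finset.range ((n-1)*(j-i-1)+1),
        gAux n x i j r (r - (j : ℕ) + (i : ℕ) + ((n : ℕ) - 1 : ℕ)) ((n - 1) * (j - i))
          (seg x (i+1) (j-1)) c (n-1-c+t') := by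
    have hseg1 : seg x i j = x i :: seg x (i+1) j := seg_cons x i j (le_of_lt hij)
    have hseg2 : seg x (i+1) j = seg x (i+1) (j-1) ++ [x j] :=
      seg_snoc x (i+1) j (by omega) (by omega)
    rw [hseg1]
    simp only [sigmaF]
    have hexp : ∀ t s : ℕ,
        (r - (j : ℕ) + (i : ℕ) + ((n : ℕ) - 1 : ℕ) - (t:ℕ)) -
          (((((n-1)*(j-i) : ℕ) : ℤ) - (t:ℤ) : ℤ) : ZMod n) + 1 + (s:ℕ) = r + (s:ℕ) := by
      intro t s
      push_cast
      rw [hn1, Nat.cast_sub (le_of_lt hij)]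
      ring
    have step1 : ∀ t ∈ Finset.range ((n-1)*(j-i)+1),
        (∏ β ∈ Finset.range t,
            x i (r - (j : ℕ) + (i : ℕ) + ((n : ℕ) - 1 : ℕ) - (β:ℕ))) *
          tauF n (r - (j : ℕ) + (i : ℕ) + ((n : ℕ) - 1 : ℕ) - (t:ℕ))
            ((((n-1)*(j-i) : ℕ) : ℤ) - (t:ℤ)) (seg x (i+1) j)
        = ∑ c ∈ Finset.range n,
            gAux n x i j r (r - (j : ℕ) + (i : ℕ) + ((n : ℕ) - 1 : ℕ)) ((n - 1) * (j - i))
              (seg x (i+1) (j-1)) c t := by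
      intro t _
      rw [hseg2, tau_snoc, Finset.mul_sum]
      apply Finset.sum_congr rfl
      intro c _
      unfold gAux
      rw [show (∏ s ∈ Finset.range c,
            x j ((r - (j : ℕ) + (i : ℕ) + ((n : ℕ) - 1 : ℕ) - (t:ℕ)) -
              (((((n-1)*(j-i) : ℕ) : ℤ) - (t:ℤ) : ℤ) : ZMod n) + 1 + (s:ℕ)))
          = ∏ s ∈ Finset.range c, x j (r + (s:ℕ)) from
        Finset.prod_congr rfl fun s _ => by rw [hexp t s]]
      ring
    rw [Finset.sum_congr rfl step1, Finset.sum_comm]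
    apply Finset.sum_congr rfl
    intro c hc
    simp only [Finset.mem_range] at hc
    apply sum_shift _ (n-1-c) ((n-1)*(j-i-1)) _ (by omega)
    · intro t ht
      unfold gAux
      rw [tau_big _ _ _ _ (by rw [hmid]; omega)]
      ring
    · intro t ht
      unfold gAux
      rw [tau_neg _ _ _ (by omega)]
      ring
  have haveR2 : sigmaF n (r - (j : ℕ) + (i : ℕ)) ((n - 1) * (j - i - 1)) (seg x i (j - 1)) *
          ∏ t ∈ Finset.range (n - 1), x i (r - (j : ℕ) + (i : ℕ) + ((t : ℕ) + 1)) =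
      ∑ t' ∈ Finset.range ((n-1)*(j-i-1)+1),
        gAux n x i j r (r - (j : ℕ) + (i : ℕ) + ((n : ℕ) - 1 : ℕ)) ((n - 1) * (j - i))
          (seg x (i+1) (j-1)) 0 (n-1+t') := by
    rw [hsegm]
    simp only [sigmaF]
    rw [Finset.sum_mul]
    apply Finset.sum_congr rfl
    intro t' _
    unfold gAux
    rw [Finset.prod_range_add]
    rw [show ((r - (j : ℕ) + (i : ℕ) + ((n : ℕ) - 1 : ℕ)) - ((n-1+t' : ℕ) : ZMod n)) = (r - (j : ℕ) + (i : ℕ)) - (t':ℕ) from by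
      push_cast
      ring]
    rw [show ((((n-1)*(j-i):ℕ):ℤ) - ((n-1+t' : ℕ):ℤ) - ((0:ℕ):ℤ))
        = (((n-1)*(j-i-1):ℕ):ℤ) - (t':ℤ) from by omega]
    rw [show (∏ β ∈ Finset.range t', x i ((r - (j : ℕ) + (i : ℕ) + ((n : ℕ) - 1 : ℕ)) - ((n-1+β : ℕ) : ZMod n)))
        = ∏ β ∈ Finset.range t', x i ((r - (j : ℕ) + (i : ℕ)) - (β:ℕ)) from
      Finset.prod_congr rfl fun β _ => by
        rw [show (r - (j : ℕ) + (i : ℕ) + ((n : ℕ) - 1 : ℕ)) - ((n-1+β : ℕ) : ZMod n) = (r - (j : ℕ) + (i : ℕ)) - (β:ℕ) from by push_cast; ring]]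
    rw [show (∏ t ∈ Finset.range (n - 1), x i (r - (j : ℕ) + (i : ℕ) + ((t : ℕ) + 1)))
        = ∏ β ∈ Finset.range (n-1), x i ((r - (j : ℕ) + (i : ℕ) + ((n : ℕ) - 1 : ℕ)) - (β:ℕ)) from by
      calc ∏ t ∈ Finset.range (n - 1), x i (r - (j : ℕ) + (i : ℕ) + ((t : ℕ) + 1))
          = ∏ β ∈ Finset.range (n-1), x i ((r - (j : ℕ) + (i : ℕ) + ((n : ℕ) - 1 : ℕ)) - ((n-1-1-β : ℕ) : ZMod n)) := by
            apply Finset.prod_congr rfl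
            intro β hβ
            simp only [Finset.mem_range] at hβ
            congr 1
            rw [show ((n-1-1-β : ℕ) : ZMod n) = ((n-1:ℕ):ZMod n) - 1 - (β:ZMod n) from by
              rw [Nat.cast_sub (by omega : β ≤ n-1-1), Nat.cast_sub (by omega : 1 ≤ n-1)]
              push_cast
              ring]
            ring
        _ = ∏ β ∈ Finset.range (n-1), x i ((r - (j : ℕ) + (i : ℕ) + ((n : ℕ) - 1 : ℕ)) - (β:ℕ)) :=
            Finset.prod_range_reflect (fun β => x i ((r - (j : ℕ) + (i : ℕ) + ((n : ℕ) - 1 : ℕ)) - (β:ℕ))) (n-1)]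
    simp only [Finset.prod_range_zero]
    ring
  have haveR1 : x j r * PF n (r - (j : ℕ) + (i : ℕ) + ((n : ℕ) - 1 : ℕ)) (n - 2) i j x =
      ∑ c ∈ Finset.range (n-1), ∑ t' ∈ Finset.range ((n-1)*(j-i-1)+1),
        gAux n x i j r (r - (j : ℕ) + (i : ℕ) + ((n : ℕ) - 1 : ℕ)) ((n - 1) * (j - i))
          (seg x (i+1) (j-1)) (c+1) (n-2-c+t') := by
    rw [PF]
    rw [show n-2+1 = n-1 from by omega]
    rw [Finset.mul_sum]
    rw [← Finset.sum_range_reflect]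
    apply Finset.sum_congr rfl
    intro c hc
    simp only [Finset.mem_range] at hc
    rw [show n-1-1-c = n-2-c from by omega]
    rw [hsegm]
    simp only [sigmaF]
    rw [Finset.mul_sum, Finset.sum_mul, Finset.mul_sum]
    apply Finset.sum_congr rfl
    intro t'' _
    unfold gAux
    rw [Finset.prod_range_add]
    rw [show (∏ β ∈ Finset.range t'', x i ((r - (j : ℕ) + (i : ℕ) + ((n : ℕ) - 1 : ℕ)) - ((n-2-c+β : ℕ) : ZMod n)))
        = ∏ β ∈ Finset.range t'', x i ((r - (j : ℕ) + (i : ℕ) + ((n : ℕ) - 1 : ℕ)) - ((n-2-c : ℕ) : ZMod n) - (β:ℕ)) from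
      Finset.prod_congr rfl fun β _ => by
        rw [show (r - (j : ℕ) + (i : ℕ) + ((n : ℕ) - 1 : ℕ)) - ((n-2-c+β : ℕ) : ZMod n)
            = (r - (j : ℕ) + (i : ℕ) + ((n : ℕ) - 1 : ℕ)) - ((n-2-c : ℕ) : ZMod n) - (β:ℕ) from by push_cast; ring]]
    rw [show ((r - (j : ℕ) + (i : ℕ) + ((n : ℕ) - 1 : ℕ)) - ((n-2-c+t'' : ℕ) : ZMod n))
        = (r - (j : ℕ) + (i : ℕ) + ((n : ℕ) - 1 : ℕ)) - ((n-2-c : ℕ) : ZMod n) - (t'':ℕ) from by push_cast; ring]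
    rw [show ((((n-1)*(j-i) : ℕ) : ℤ) - ((n-2-c+t'' : ℕ) : ℤ) - ((c+1 : ℕ) : ℤ))
        = (((n-1)*(j-i-1) : ℕ) : ℤ) - (t'' : ℤ) from by omega]
    rw [Finset.prod_range_succ']
    rw [show r + ((0:ℕ) : ZMod n) = r from by push_cast; ring]
    rw [show (∏ s ∈ Finset.range c, x j (r + ((s+1 : ℕ) : ZMod n)))
        = ∏ s ∈ Finset.range c, x j (r + ((s:ℕ) + 1)) from
      Finset.prod_congr rfl fun s _ => by
        rw [show r + ((s+1:ℕ) : ZMod n) = r + ((s:ℕ)+1) from by push_cast; ring]]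
    rw [show n-2-(n-2-c) = c from by omega]
    rw [show (∏ s ∈ Finset.range c,
          x j ((r - (j : ℕ) + (i : ℕ) + ((n : ℕ) - 1 : ℕ)) - ((n-2-c : ℕ) : ZMod n) + (j : ℕ) - (i : ℕ) - 1 - (s:ℕ)))
        = ∏ s ∈ Finset.range c, x j (r + ((s:ℕ) + 1)) from by
      calc ∏ s ∈ Finset.range c,
            x j ((r - (j : ℕ) + (i : ℕ) + ((n : ℕ) - 1 : ℕ)) - ((n-2-c : ℕ) : ZMod n) + (j : ℕ) - (i : ℕ) - 1 - (s:ℕ))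
          = ∏ s ∈ Finset.range c, x j (r + (((c-1-s : ℕ) : ZMod n) + 1)) := by
            apply Finset.prod_congr rfl
            intro s hs
            simp only [Finset.mem_range] at hs
            congr 1
            rw [show ((n-2-c : ℕ) : ZMod n) = ((n-1 : ℕ) : ZMod n) - 1 - (c : ZMod n) from by
              rw [Nat.cast_sub (by omega : c ≤ n-2), show (n-2:ℕ) = n-1-1 from by omega,
                Nat.cast_sub (by omega : 1 ≤ n-1)]
              push_cast
              ring]
            rw [show ((c-1-s : ℕ) : ZMod n) = (c : ZMod n) - 1 - (s : ZMod n) from by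
              rw [Nat.cast_sub (by omega : s ≤ c-1), Nat.cast_sub (by omega : 1 ≤ c)]
              push_cast
              ring]
            ring
        _ = ∏ s ∈ Finset.range c, x j (r + ((s:ℕ) + 1)) :=
            Finset.prod_range_reflect (fun s => x j (r + ((s:ℕ) + 1))) c]
    ring
  rw [haveL, haveR1, haveR2]
  have hrange : Finset.range n = Finset.range ((n-1)+1) := by
    congr 1
    omega
  rw [hrange, Finset.sum_range_succ']
  congr 1
  apply Finset.sum_congr rfl
  intro c _
  apply Finset.sum_congr rfl
  intro t' _
  have e : n-1-(c+1)+t' = n-2-c+t' := by omega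
  rw [e]
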